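/- Let d, m, k, p, n be positive integers with 2k < p ≤ d and 2k < d. Let A ∈ ℝ^{d×m} satisfy Spark(A) > 2k, let P ∈ ℝ^{m×m} be a permutation matrix and D ∈ ℝ^{m×m} an invertible diagonal matrix, and set A' = A P D. Let Φ_1,…,Φ_n ∈ ℝ^{p×d} be independent random matrices with i.i.d. N(0,1/d) entries. Then with probability one the following holds: for all X, X' ∈ ℝ^{m×n} each of whose columns has at most k nonzero entries, if Φ_j A' x'_j = Φ_j A x_j for all j ∈ {1,…,n}, then A' X' = A X. -/

import Mathlib

set_option maxHeartbeats 1000000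

open MeasureTheory ProbabilityTheory
open scoped NNReal ENNReal

/-- Gram determinant criterion for linear independence of a finite family in `ℝ^t`. -/
lemma gram_det_iff {s t : ℕ} (v : Fin s → Fin t → ℝ) :
    LinearIndependent ℝ v ↔ (Matrix.of fun i j : Fin s => ∑ l, v i l * v j l).det ≠ 0 := by
  classical
  set G : Matrix (Fin s) (Fin s) ℝ := Matrix.of fun i j => ∑ l, v i l * v j l with hG
  have hmv : ∀ x : Fin s → ℝ, G.mulVec x = fun i => ∑ l, v i l * (∑ j, x j * v j l) := by
    intro x
    funext i
    simp only [Matrix.mulVec, dotProduct, hG, Matrix.of_apply]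
    simp_rw [Finset.sum_mul, Finset.mul_sum]
    rw [Finset.sum_comm]
    refine Finset.sum_congr rfl fun l _ => Finset.sum_congr rfl fun j _ => by ring
  have key : (∃ x, x ≠ 0 ∧ G.mulVec x = 0) ↔ ¬ LinearIndependent ℝ v := by
    constructor
    · rintro ⟨x, hx0, hx⟩
      rw [Fintype.not_linearIndependent_iff]
      refine ⟨x, ?_, ?_⟩
      · -- ∑ x j • v j = 0
        have hw : ∀ l, (∑ j, x j * v j l) = 0 := by
          have hQ : (∑ l, (∑ j, x j * v j l) * (∑ j, x j * v j l)) = 0 := by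
            calc (∑ l, (∑ j, x j * v j l) * (∑ j, x j * v j l))
                = ∑ i, x i * (G.mulVec x) i := by
                  rw [hmv]
                  simp_rw [Finset.mul_sum]
                  rw [Finset.sum_comm]
                  refine Finset.sum_congr rfl fun l _ => ?_
                  refine Finset.sum_congr rfl fun c _ => ?_
                  rw [Finset.sum_mul]
                  exact Finset.sum_congr rfl fun j _ => by ring
              _ = 0 := by simp [hx]
          intro l
          have h1 : ∀ l ∈ Finset.univ, (0:ℝ) ≤ (∑ j, x j * v j l) * (∑ j, x j * v j l) :=
            fun l _ => mul_self_nonneg _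
          have := (Finset.sum_eq_zero_iff_of_nonneg h1).mp hQ l (Finset.mem_univ l)
          exact mul_self_eq_zero.mp this
        funext l
        simp only [Finset.sum_apply, Pi.smul_apply, smul_eq_mul, Pi.zero_apply]
        exact hw l
      · by_contra h
        push_neg at h
        exact hx0 (funext fun i => h i)
    · intro h
      rw [Fintype.not_linearIndependent_iff] at h
      obtain ⟨g, hg, i0, hi0⟩ := h
      refine ⟨g, fun h0 => hi0 (by rw [h0]; rfl), ?_⟩
      have hw : ∀ l, (∑ j, g j * v j l) = 0 := by
        intro l
        have := congrFun hg l
        simpa using this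
      rw [hmv]
      funext i
      simp [hw]
  rw [Matrix.exists_mulVec_eq_zero_iff] at key
  rw [ne_eq, key, not_not]

/-- A proper submodule of `ℝ^d` is null for the iid Gaussian measure. -/
lemma gauss_null_submodule (d : ℕ) (v : ℝ≥0) (hv : v ≠ 0)
    (V : Submodule ℝ (Fin d → ℝ)) (hV : V ≠ ⊤) :
    (Measure.pi fun _ : Fin d => gaussianReal 0 v) (V : Set (Fin d → ℝ)) = 0 := by
  classical
  obtain ⟨f, hf0, hfmap⟩ := V.exists_dual_map_eq_bot_of_lt_top (lt_top_iff_ne_top.mpr hV)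
    inferInstance
  have hfV : ∀ x ∈ V, f x = 0 := by
    intro x hx
    have : f x ∈ V.map f := Submodule.mem_map_of_mem hx
    rw [hfmap] at this
    simpa using this
  -- the coefficient vector of f
  set a : Fin d → ℝ := fun c => f (Pi.single c 1) with ha
  have hrep : ∀ x : Fin d → ℝ, f x = ∑ c, x c * a c := by
    intro x
    conv_lhs => rw [pi_eq_sum_univ x]
    rw [map_sum]
    refine Finset.sum_congr rfl fun c _ => ?_
    rw [_root_.map_smul]
    have hsingle : (fun j => if c = j then (1:ℝ) else 0) = Pi.single c 1 := by
      funext j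
      simp [Pi.single_apply, eq_comm]
    rw [hsingle]
    rfl
  have ha0 : a ≠ 0 := by
    intro h
    apply hf0
    apply LinearMap.ext
    intro x
    rw [hrep x, h]
    simp
  obtain ⟨c0, hc0⟩ : ∃ c0, a c0 ≠ 0 := by
    by_contra h
    push_neg at h
    exact ha0 (funext h)
  -- d must be positive
  obtain ⟨d', rfl⟩ : ∃ d', d = d' + 1 := by
    cases d with
    | zero => exact absurd (Fin.elim0 c0) id
    | succ d' => exact ⟨d', rfl⟩
  -- the hyperplane
  set H : Set (Fin (d' + 1) → ℝ) := {x | f x = 0} with hH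
  have hVH : (V : Set (Fin (d' + 1) → ℝ)) ⊆ H := fun x hx => hfV x hx
  refine measure_mono_null hVH ?_
  have hfc : Continuous f := LinearMap.continuous_of_finiteDimensional f
  have hHm : MeasurableSet H := hfc.measurable (measurableSet_singleton 0)
  set ρ1 := gaussianReal (0:ℝ) v
  set e := MeasurableEquiv.piFinSuccAbove (fun _ : Fin (d' + 1) => ℝ) c0
  have mp := measurePreserving_piFinSuccAbove (fun _ : Fin (d' + 1) => gaussianReal 0 v) c0
  have hSm : MeasurableSet (e.symm ⁻¹' H) := e.symm.measurable hHm
  have hpre : (Measure.pi fun _ : Fin (d' + 1) => gaussianReal 0 v) H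
      = (ρ1.prod (Measure.pi fun _ : Fin d' => gaussianReal 0 v)) (e.symm ⁻¹' H) := by
    have := (mp.symm e).measure_preimage hHm.nullMeasurableSet
    exact this.symm
  rw [hpre, Measure.prod_apply_symm hSm]
  have hsect : ∀ y : Fin d' → ℝ,
      ρ1 ((fun x => (x, y)) ⁻¹' (e.symm ⁻¹' H)) = 0 := by
    intro y
    have hset : ((fun x => (x, y)) ⁻¹' (e.symm ⁻¹' H))
        ⊆ {x : ℝ | x = (-(f (Fin.insertNth c0 0 y))) / a c0} := by
      intro x hx
      have hx' : f (Fin.insertNth c0 x y) = 0 := by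
        have h1 : e.symm (x, y) ∈ H := hx
        have h2 : e.symm (x, y) = Fin.insertNth c0 x y := by
          simp [e, MeasurableEquiv.piFinSuccAbove, Fin.insertNthEquiv]
        rwa [h2] at h1
      have hdecomp : Fin.insertNth c0 x y
          = (Fin.insertNth c0 (0:ℝ) y : Fin (d'+1) → ℝ)
            + x • (Pi.single c0 (1:ℝ) : Fin (d'+1) → ℝ) := by
        funext j
        by_cases hj : j = c0
        · subst hj
          simp [Fin.insertNth_apply_same]
        · obtain ⟨j', rfl⟩ := Fin.exists_succAbove_eq (Ne.symm (Ne.intro hj)).symm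
          simp [Fin.insertNth_apply_succAbove,
            Pi.single_eq_of_ne (Fin.succAbove_ne c0 j')]
      rw [hdecomp, map_add, _root_.map_smul] at hx'
      have hx1 : f (Fin.insertNth c0 (0:ℝ) y) + x * a c0 = 0 := hx'
      have hx2 : x * a c0 = -(f ((Fin.insertNth c0 (0:ℝ) y : Fin (d'+1) → ℝ))) := by linarith
      show x = _
      rw [eq_div_iff hc0]
      exact hx2
    refine measure_mono_null hset ?_
    have : ({x : ℝ | x = (-(f (Fin.insertNth c0 0 y))) / a c0} : Set ℝ)
        = {(-(f (Fin.insertNth c0 0 y))) / a c0} := by ext x; simp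
    rw [this]
    exact gaussianReal_absolutelyContinuous 0 hv (Real.volume_singleton)
  calc (∫⁻ y, ρ1 ((fun x => (x, y)) ⁻¹' (e.symm ⁻¹' H))
        ∂(Measure.pi fun _ : Fin d' => gaussianReal 0 v))
      = ∫⁻ _, 0 ∂(Measure.pi fun _ : Fin d' => gaussianReal 0 v) :=
        lintegral_congr hsect
    _ = 0 := lintegral_zero

/-- surjectivity of the "dot with a linearly independent family" map -/
lemma dotMap_surjective {t d : ℕ} (B : Fin t → Fin d → ℝ) (hB : LinearIndependent ℝ B) :
    Function.Surjective (Matrix.mulVecLin (Matrix.of fun (j : Fin t) (c : Fin d) => B j c)) := by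
  classical
  set M : Matrix (Fin t) (Fin d) ℝ := Matrix.of fun j c => B j c
  set N : Matrix (Fin d) (Fin t) ℝ := Matrix.of fun c l => B l c
  have hMN : M * N = Matrix.of fun j l : Fin t => ∑ c, B j c * B l c := by
    ext j l
    simp [M, N, Matrix.mul_apply]
  have hdet : (M * N).det ≠ 0 := by
    rw [hMN]
    exact (gram_det_iff B).mp hB
  have hunit : IsUnit (M * N) := (Matrix.isUnit_iff_isUnit_det _).mpr (isUnit_iff_ne_zero.mpr hdet)
  have hsurj : Function.Surjective ((M * N).mulVecLin) := by
    have := Matrix.mulVec_surjective_iff_isUnit.mpr hunit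
    exact this
  rw [Matrix.mulVecLin_mul] at hsurj
  exact Function.Surjective.of_comp hsurj

/-- measurability of the "not linearly independent" sets -/
lemma meas_bad {t d r s : ℕ} (T : (Fin d → ℝ) →ₗ[ℝ] (Fin t → ℝ)) (J : Fin s → Fin r) :
    MeasurableSet {ψ : Fin r → (Fin d → ℝ) | ¬ LinearIndependent ℝ fun i : Fin s => T (ψ (J i))} := by
  classical
  have hset : {ψ : Fin r → (Fin d → ℝ) | ¬ LinearIndependent ℝ fun i : Fin s => T (ψ (J i))}
      = (fun ψ : Fin r → (Fin d → ℝ) =>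
          (Matrix.of fun i j : Fin s => ∑ l, T (ψ (J i)) l * T (ψ (J j)) l).det) ⁻¹' {0} := by
    ext ψ
    simp only [Set.mem_setOf_eq, Set.mem_preimage, Set.mem_singleton_iff]
    rw [gram_det_iff]
    tauto
  rw [hset]
  have hTc : Continuous T := T.continuous_of_finiteDimensional
  have hcont : Continuous (fun ψ : Fin r → (Fin d → ℝ) =>
      (Matrix.of fun i j : Fin s => ∑ l, T (ψ (J i)) l * T (ψ (J j)) l).det) := by
    refine Continuous.matrix_det (continuous_matrix fun i j => ?_)
    exact continuous_finset_sum Finset.univ fun l _ =>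
      (((continuous_apply l).comp (hTc.comp (continuous_apply (J i)))).mul
        ((continuous_apply l).comp (hTc.comp (continuous_apply (J j)))))
  exact hcont.measurable (measurableSet_singleton 0)

/-- CORE: with `q ≤ t` rows, the images under a surjective map to `ℝ^t` are a.s. independent. -/
lemma core_li {d t : ℕ} (v : ℝ≥0) (hv : v ≠ 0)
    (T : (Fin d → ℝ) →ₗ[ℝ] (Fin t → ℝ)) (hT : Function.Surjective T) :
    ∀ q, q ≤ t → (Measure.pi fun _ : Fin q => Measure.pi fun _ : Fin d => gaussianReal 0 v)
      {ψ : Fin q → (Fin d → ℝ) | ¬ LinearIndependent ℝ fun i => T (ψ i)} = 0 := by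
  classical
  set ρ : Measure (Fin d → ℝ) := Measure.pi fun _ : Fin d => gaussianReal 0 v with hρ
  intro q
  induction q with
  | zero =>
    intro _
    have : {ψ : Fin 0 → (Fin d → ℝ) | ¬ LinearIndependent ℝ fun i => T (ψ i)} = ∅ := by
      ext ψ
      simp [linearIndependent_empty_type]
    rw [this]
    simp
  | succ q ih =>
    intro hq
    have hq' : q ≤ t := Nat.le_of_succ_le hq
    have hqt : q < t := hq
    set Bad : ∀ r : ℕ, Set (Fin r → (Fin d → ℝ)) :=
      fun r => {ψ : Fin r → (Fin d → ℝ) | ¬ LinearIndependent ℝ fun i => T (ψ i)} with hBad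
    have hBadm : ∀ r, MeasurableSet (Bad r) := fun r => meas_bad T (id : Fin r → Fin r)
    set e := MeasurableEquiv.piFinSuccAbove (fun _ : Fin (q + 1) => (Fin d → ℝ)) (Fin.last q)
    have mp := measurePreserving_piFinSuccAbove (fun _ : Fin (q + 1) => ρ) (Fin.last q)
    set π := ρ.prod (Measure.pi fun _ : Fin q => ρ) with hπ
    have hpre : (Measure.pi fun _ : Fin (q+1) => ρ) (Bad (q+1)) = π (e.symm ⁻¹' (Bad (q+1))) :=
      ((mp.symm e).measure_preimage (hBadm (q+1)).nullMeasurableSet).symm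
    rw [show (Measure.pi fun _ : Fin (q+1) => Measure.pi fun _ : Fin d => gaussianReal 0 v)
        = Measure.pi fun _ : Fin (q+1) => ρ from rfl, hpre]
    -- the preimage consists of pairs (x, ψ) with insertNth last x ψ bad, i.e. snoc ψ x bad
    have hsymm : ∀ z : (Fin d → ℝ) × (Fin q → (Fin d → ℝ)),
        e.symm z = Fin.snoc z.2 z.1 := by
      rintro ⟨x, ψ⟩
      have : e.symm (x, ψ) = Fin.insertNth (Fin.last q) x ψ := by
        simp [e, MeasurableEquiv.piFinSuccAbove, Fin.insertNthEquiv]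
      rw [this, Fin.insertNth_last']
    have hsub : e.symm ⁻¹' (Bad (q+1)) ⊆
        (Set.univ ×ˢ Bad q) ∪ ((e.symm ⁻¹' (Bad (q+1))) ∩ (Set.univ ×ˢ (Bad q)ᶜ)) := by
      rintro ⟨x, ψ⟩ hz
      by_cases hψ : ψ ∈ Bad q
      · exact Or.inl ⟨Set.mem_univ _, hψ⟩
      · exact Or.inr ⟨hz, Set.mem_univ _, hψ⟩
    refine le_antisymm ?_ zero_le
    refine le_trans (measure_mono hsub) ?_
    refine le_trans (measure_union_le _ _) ?_
    have h1 : π (Set.univ ×ˢ Bad q) = 0 := by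
      rw [Measure.prod_prod, ih hq', mul_zero]
    have h2 : π ((e.symm ⁻¹' (Bad (q+1))) ∩ (Set.univ ×ˢ (Bad q)ᶜ)) = 0 := by
      set S2 := (e.symm ⁻¹' (Bad (q+1))) ∩ (Set.univ ×ˢ (Bad q)ᶜ) with hS2
      have hS2m : MeasurableSet S2 :=
        (e.symm.measurable (hBadm (q+1))).inter (MeasurableSet.univ.prod (hBadm q).compl)
      rw [hπ, Measure.prod_apply_symm hS2m]
      have hsect : ∀ ψ : Fin q → (Fin d → ℝ), ρ ((fun x => (x, ψ)) ⁻¹' S2) = 0 := by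
        intro ψ
        by_cases hψ : ψ ∈ Bad q
        · have : ((fun x => (x, ψ)) ⁻¹' S2) = ∅ := by
            ext x
            simp only [Set.mem_preimage, hS2, Set.mem_inter_iff, Set.mem_prod, Set.mem_univ,
              Set.mem_compl_iff, true_and, Set.mem_empty_iff_false, iff_false]
            rintro ⟨-, h⟩
            exact h hψ
          rw [this]; exact measure_empty
        · -- ψ gives independent images; section is contained in a proper submodule preimage
          have hLI : LinearIndependent ℝ fun i => T (ψ i) := not_not.mp hψ
          set W : Submodule ℝ (Fin t → ℝ) :=
            Submodule.span ℝ (Set.range fun i => T (ψ i)) with hW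
          have hWne : W ≠ ⊤ := by
            intro htop
            have h1 : Module.finrank ℝ W ≤ q := by
              refine le_trans (finrank_span_le_card _) ?_
              have := Set.toFinset_card (Set.range fun i => T (ψ i))
              rw [this]
              exact le_trans (Fintype.card_range_le _) (by simp)
            rw [htop] at h1
            rw [finrank_top] at h1
            have : Module.finrank ℝ (Fin t → ℝ) = t := Module.finrank_fin_fun ℝ
            omega
          have hcomap : W.comap T ≠ ⊤ := by
            intro htop
            apply hWne
            have h1 : Submodule.map T (W.comap T) = W := by
              rw [Submodule.map_comap_eq, LinearMap.range_eq_top.mpr hT, top_inf_eq]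
            rw [← h1, htop, Submodule.map_top, LinearMap.range_eq_top.mpr hT]
          have hsub2 : ((fun x => (x, ψ)) ⁻¹' S2) ⊆ (W.comap T : Set (Fin d → ℝ)) := by
            intro x hx
            obtain ⟨hx1, -⟩ := hx
            have hx1' : (Fin.snoc (α := fun _ => Fin d → ℝ) ψ x) ∈ Bad (q+1) := by
              rw [← hsymm (x, ψ)]; exact hx1
            have hbad : ¬ LinearIndependent ℝ
                (fun i : Fin (q+1) => T ((Fin.snoc (α := fun _ => Fin d → ℝ) ψ x) i)) := hx1'
            have hcomp : (fun i : Fin (q+1) => T ((Fin.snoc (α := fun _ => Fin d → ℝ) ψ x) i))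
                = Fin.snoc (α := fun _ => Fin t → ℝ) (fun i => T (ψ i)) (T x) := by
              have := Fin.comp_snoc (T : (Fin d → ℝ) → (Fin t → ℝ)) ψ x
              exact this
            rw [hcomp, linearIndependent_fin_snoc] at hbad
            push_neg at hbad
            exact hbad hLI
          exact measure_mono_null hsub2 (gauss_null_submodule d v hv _ hcomap)
      calc (∫⁻ ψ, ρ ((fun x => (x, ψ)) ⁻¹' S2) ∂(Measure.pi fun _ : Fin q => ρ))
          = ∫⁻ _, 0 ∂(Measure.pi fun _ : Fin q => ρ) := lintegral_congr hsect
        _ = 0 := lintegral_zero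
    rw [h1, h2, add_zero]

/-- EXT: with `q ≥ t` rows, the images of the first `t` rows are a.s. independent. -/
lemma ext_li {d t : ℕ} (v : ℝ≥0) (hv : v ≠ 0)
    (T : (Fin d → ℝ) →ₗ[ℝ] (Fin t → ℝ)) (hT : Function.Surjective T) :
    ∀ q (hq : t ≤ q),
      (Measure.pi fun _ : Fin q => Measure.pi fun _ : Fin d => gaussianReal 0 v)
      {ψ : Fin q → (Fin d → ℝ) |
        ¬ LinearIndependent ℝ fun i : Fin t => T (ψ (Fin.castLE hq i))} = 0 := by
  classical
  set ρ : Measure (Fin d → ℝ) := Measure.pi fun _ : Fin d => gaussianReal 0 v with hρ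
  intro q hq
  induction q, hq using Nat.le_induction with
  | base =>
    have hs : {ψ : Fin t → (Fin d → ℝ) |
        ¬ LinearIndependent ℝ fun i : Fin t => T (ψ (Fin.castLE (le_refl t) i))}
        = {ψ : Fin t → (Fin d → ℝ) | ¬ LinearIndependent ℝ fun i => T (ψ i)} := by
      ext ψ
      have : ∀ i : Fin t, Fin.castLE (le_refl t) i = i := fun i => Fin.ext rfl
      simp only [Set.mem_setOf_eq, this]
    rw [hs]
    exact core_li v hv T hT t le_rfl
  | succ q hq ih =>
    set Badq : Set (Fin q → (Fin d → ℝ)) :=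
      {ψ | ¬ LinearIndependent ℝ fun i : Fin t => T (ψ (Fin.castLE hq i))} with hBadq
    have hBadqm : MeasurableSet Badq := meas_bad T (Fin.castLE hq)
    have hBadm : MeasurableSet {ψ : Fin (q+1) → (Fin d → ℝ) |
        ¬ LinearIndependent ℝ fun i : Fin t => T (ψ (Fin.castLE (Nat.le_succ_of_le hq) i))} :=
      meas_bad T (Fin.castLE (Nat.le_succ_of_le hq))
    set e := MeasurableEquiv.piFinSuccAbove (fun _ : Fin (q + 1) => (Fin d → ℝ)) (Fin.last q)
    have mp := measurePreserving_piFinSuccAbove (fun _ : Fin (q + 1) => ρ) (Fin.last q)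
    set π := ρ.prod (Measure.pi fun _ : Fin q => ρ) with hπ
    have hpre : (Measure.pi fun _ : Fin (q+1) => ρ) {ψ : Fin (q+1) → (Fin d → ℝ) |
        ¬ LinearIndependent ℝ fun i : Fin t => T (ψ (Fin.castLE (Nat.le_succ_of_le hq) i))}
        = π (e.symm ⁻¹' {ψ : Fin (q+1) → (Fin d → ℝ) |
        ¬ LinearIndependent ℝ fun i : Fin t => T (ψ (Fin.castLE (Nat.le_succ_of_le hq) i))}) :=
      ((mp.symm e).measure_preimage hBadm.nullMeasurableSet).symm
    rw [show (Measure.pi fun _ : Fin (q+1) => Measure.pi fun _ : Fin d => gaussianReal 0 v)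
        = Measure.pi fun _ : Fin (q+1) => ρ from rfl, hpre]
    have hsub : e.symm ⁻¹' {ψ : Fin (q+1) → (Fin d → ℝ) |
        ¬ LinearIndependent ℝ fun i : Fin t => T (ψ (Fin.castLE (Nat.le_succ_of_le hq) i))}
        ⊆ Set.univ ×ˢ Badq := by
      rintro ⟨x, ψ⟩ hz
      refine ⟨Set.mem_univ _, ?_⟩
      have hsymm : e.symm (x, ψ) = Fin.snoc (α := fun _ => Fin d → ℝ) ψ x := by
        have : e.symm (x, ψ) = Fin.insertNth (Fin.last q) x ψ := by
          simp [e, MeasurableEquiv.piFinSuccAbove, Fin.insertNthEquiv]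
        rw [this, Fin.insertNth_last']
      have hz' : ¬ LinearIndependent ℝ fun i : Fin t =>
          T ((Fin.snoc (α := fun _ => Fin d → ℝ) ψ x) (Fin.castLE (Nat.le_succ_of_le hq) i)) := by
        rw [← hsymm]
        exact hz
      have heq : (fun i : Fin t =>
          T ((Fin.snoc (α := fun _ => Fin d → ℝ) ψ x) (Fin.castLE (Nat.le_succ_of_le hq) i)))
          = fun i : Fin t => T (ψ (Fin.castLE hq i)) := by
        funext i
        have hcast : Fin.castLE (Nat.le_succ_of_le hq) i
            = Fin.castSucc (Fin.castLE hq i) := Fin.ext rfl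
        rw [hcast, Fin.snoc_castSucc]
      rw [heq] at hz'
      exact hz'
    refine le_antisymm (le_trans (measure_mono hsub) ?_) zero_le
    rw [Measure.prod_prod, ih, mul_zero]

/-- the columns of `A` indexed by a finset `T`, as a family indexed by `Fin T.card` -/
noncomputable def colsOf {d m : ℕ} (A : Matrix (Fin d) (Fin m) ℝ) (T : Finset (Fin m)) :
    Fin T.card → Fin d → ℝ :=
  fun j c => A c ((T.orderIsoOfFin rfl j : Fin m))

/-- the linear map `x ↦ (⟨x, A_l⟩)_{l ∈ T}` -/
noncomputable def dotCols {d m : ℕ} (A : Matrix (Fin d) (Fin m) ℝ) (T : Finset (Fin m)) :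
    (Fin d → ℝ) →ₗ[ℝ] (Fin T.card → ℝ) :=
  Matrix.mulVecLin (Matrix.of fun j c => colsOf A T j c)

lemma dotCols_apply {d m : ℕ} (A : Matrix (Fin d) (Fin m) ℝ) (T : Finset (Fin m))
    (x : Fin d → ℝ) (j : Fin T.card) :
    dotCols A T x j = ∑ c, colsOf A T j c * x c := by
  simp [dotCols, Matrix.mulVecLin_apply, Matrix.mulVec, dotProduct]

/-- Deterministic part: if for every small support the dot-products matrix is nonsingular,
then the only small-support `z` with `Φ (A z) = 0` is `0`. -/
lemma det_good {d m k p : ℕ} (hkp : 2 * k < p)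
    (A : Matrix (Fin d) (Fin m) ℝ) (φ : Fin p → Fin d → ℝ)
    (hφ : ∀ (T : Finset (Fin m)) (h : T.card ≤ 2 * k),
      LinearIndependent ℝ fun i : Fin T.card =>
        dotCols A T (φ (Fin.castLE (le_trans h (le_of_lt hkp)) i)))
    (z : Fin m → ℝ) (hz : (Finset.univ.filter fun i => z i ≠ 0).card ≤ 2 * k)
    (h0 : (Matrix.of φ).mulVec (A.mulVec z) = 0) : z = 0 := by
  classical
  set T : Finset (Fin m) := Finset.univ.filter fun i => z i ≠ 0 with hT
  have hTk : T.card ≤ 2 * k := hz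
  have ht : T.card ≤ p := le_trans hTk (le_of_lt hkp)
  set t := T.card with htdef
  set iso := T.orderIsoOfFin rfl with hiso
  have hLI := hφ T hTk
  set v : Fin t → Fin t → ℝ :=
    fun i => dotCols A T (φ (Fin.castLE ht i)) with hv
  set M : Matrix (Fin t) (Fin t) ℝ := Matrix.of fun i l => v i l with hM
  have hdet : M.det ≠ 0 := by
    intro hdet0
    obtain ⟨g, hg0, hg⟩ := (Matrix.exists_vecMul_eq_zero_iff).mpr hdet0
    rw [Fintype.linearIndependent_iff] at hLI
    apply hg0
    funext i
    refine (hLI g ?_) i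
    funext l
    have := congrFun hg l
    simp only [Matrix.vecMul, dotProduct, hM, Matrix.of_apply, Pi.zero_apply] at this
    simp only [Finset.sum_apply, Pi.smul_apply, smul_eq_mul, Pi.zero_apply]
    exact this
  set u : Fin t → ℝ := fun l => z (iso l) with hu
  have hMu : M.mulVec u = 0 := by
    funext i
    simp only [Matrix.mulVec, dotProduct, hM, Matrix.of_apply, Pi.zero_apply]
    have hterm : ∀ l : Fin t, v i l * u l
        = (∑ c, colsOf A T l c * φ (Fin.castLE ht i) c) * z (iso l) := by
      intro l
      show (dotCols A T (φ (Fin.castLE ht i))) l * u l = _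
      rw [dotCols_apply]
    have hAz : ∀ c, A.mulVec z c = ∑ l : Fin t, A c (iso l) * z (iso l) := by
      intro c
      have h1 : A.mulVec z c = ∑ i, A c i * z i := by
        simp [Matrix.mulVec, dotProduct]
      have h2 : (∑ i, A c i * z i) = ∑ i ∈ T, A c i * z i := by
        refine (Finset.sum_subset (Finset.subset_univ T) ?_).symm
        intro i _ hi
        have hzi : z i = 0 := by
          by_contra hne
          exact hi (by simp [hT, hne])
        simp [hzi]
      have h3 : (∑ i ∈ T, A c i * z i) = ∑ l : Fin t, A c (iso l) * z (iso l) := by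
        rw [← Finset.sum_coe_sort T (fun i => A c i * z i)]
        exact (Fintype.sum_equiv iso.toEquiv (fun l => A c (iso l) * z (iso l))
          (fun x => A c x * z x) (fun l => rfl)).symm
      rw [h1, h2, h3]
    calc (∑ l, v i l * u l)
        = ∑ c, φ (Fin.castLE ht i) c * (A.mulVec z) c := by
          simp_rw [hterm, hAz, Finset.sum_mul, Finset.mul_sum]
          rw [Finset.sum_comm]
          refine Finset.sum_congr rfl fun c _ => Finset.sum_congr rfl fun x _ => ?_
          simp only [colsOf]
          ring
      _ = 0 := by
          have := congrFun h0 (Fin.castLE ht i)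
          simpa [Matrix.mulVec, dotProduct] using this
  have hu0 : u = 0 := by
    by_contra hu0
    exact hdet (Matrix.exists_mulVec_eq_zero_iff.mp ⟨u, hu0, hMu⟩)
  funext i
  by_cases hi : i ∈ T
  · have : i = iso (iso.symm ⟨i, hi⟩) := by simp
    rw [this]
    have := congrFun hu0 (iso.symm ⟨i, hi⟩)
    simpa [hu] using this
  · simp only [hT, Finset.mem_filter, Finset.mem_univ, true_and, not_not] at hi
    exact hi

open Classical in
/-- Lemma 1 of the paper: if `A' = A P D` for a permutation matrix `P`
and an invertible diagonal matrix `D`, then with probability one over the independent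
`N(0,1/d)` Gaussian sampling matrices `Φ_1, …, Φ_n`, any pair of matrices `X, X'`
with at most `k`-sparse columns producing equal measurements satisfies `A'X' = AX`. -/
theorem stmt5 (d m k p n : ℕ)
    (hd : 0 < d) (hm : 0 < m) (hk : 0 < k) (hp : 0 < p) (hn : 0 < n)
    (hkp : 2 * k < p) (hpd : p ≤ d) (hkd : 2 * k < d)
    (A : Matrix (Fin d) (Fin m) ℝ)
    (hA : ∀ T : Finset (Fin m), T.card ≤ 2 * k →
      LinearIndependent ℝ (fun j : T => fun i => A i (j : Fin m)))
    (P : Equiv.Perm (Fin m)) (D : Fin m → ℝ) (hD : ∀ i, D i ≠ 0)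
    (A' : Matrix (Fin d) (Fin m) ℝ)
    (hA' : A' = A * ((Equiv.toPEquiv P).toMatrix : Matrix (Fin m) (Fin m) ℝ) * Matrix.diagonal D) :
    (Measure.pi fun _ : Fin n => Measure.pi fun _ : Fin p =>
        Measure.pi fun _ : Fin d => gaussianReal 0 (d : ℝ≥0)⁻¹)
      {Φ : Fin n → Fin p → Fin d → ℝ |
        ∀ X X' : Matrix (Fin m) (Fin n) ℝ,
          (∀ j, (Finset.univ.filter fun i => X i j ≠ 0).card ≤ k) →
          (∀ j, (Finset.univ.filter fun i => X' i j ≠ 0).card ≤ k) →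
          (∀ j : Fin n, (Matrix.of (Φ j)).mulVec (A'.mulVec fun i => X' i j)
              = (Matrix.of (Φ j)).mulVec (A.mulVec fun i => X i j)) →
          A' * X' = A * X} = 1 := by

  classical
  set σ : ℝ≥0 := (d : ℝ≥0)⁻¹ with hσdef
  have hσ : σ ≠ 0 := by
    simp only [hσdef, ne_eq, inv_eq_zero, Nat.cast_eq_zero]
    omega
  set ρ : Measure (Fin d → ℝ) := Measure.pi fun _ : Fin d => gaussianReal 0 σ with hρ
  set ν : Measure (Fin p → Fin d → ℝ) := Measure.pi fun _ : Fin p => ρ with hν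
  set μ : Measure (Fin n → Fin p → Fin d → ℝ) := Measure.pi fun _ : Fin n => ν with hμ
  -- linear independence of columns
  have hcols : ∀ (T : Finset (Fin m)), T.card ≤ 2 * k → LinearIndependent ℝ (colsOf A T) := by
    intro T hT
    have := (hA T hT).comp (fun l : Fin T.card => T.orderIsoOfFin rfl l)
      (fun a b hab => (T.orderIsoOfFin rfl).injective hab)
    exact this
  -- the bad sets
  set BadSet : ∀ T : Finset (Fin m), T.card ≤ 2 * k → Set (Fin p → Fin d → ℝ) :=
    fun T hT => {φ | ¬ LinearIndependent ℝ fun i : Fin T.card =>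
      dotCols A T (φ (Fin.castLE (le_trans hT (le_of_lt hkp)) i))} with hBadSet
  have hBadMeas : ∀ T hT, MeasurableSet (BadSet T hT) :=
    fun T hT => meas_bad (dotCols A T) (Fin.castLE (le_trans hT (le_of_lt hkp)))
  have hBadNull : ∀ T hT, ν (BadSet T hT) = 0 := by
    intro T hT
    exact ext_li σ hσ (dotCols A T) (dotMap_surjective (colsOf A T) (hcols T hT)) p
      (le_trans hT (le_of_lt hkp))
  set BadU : Set (Fin p → Fin d → ℝ) :=
    ⋃ (T : Finset (Fin m)), ⋃ (hT : T.card ≤ 2 * k), BadSet T hT with hBadU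
  have hBadUMeas : MeasurableSet BadU :=
    MeasurableSet.iUnion fun T => MeasurableSet.iUnion fun hT => hBadMeas T hT
  have hBadUNull : ν BadU = 0 :=
    measure_iUnion_null fun T => measure_iUnion_null fun hT => hBadNull T hT
  -- per-coordinate cylinders
  set Cyl : Fin n → Set (Fin n → Fin p → Fin d → ℝ) :=
    fun j => {Φ | Φ j ∈ BadU} with hCyl
  have hCylNull : ∀ j, μ (Cyl j) = 0 := by
    intro j
    have hset : Cyl j = Set.pi Set.univ (fun i : Fin n => if i = j then BadU else Set.univ) := by
      ext Φ
      simp only [hCyl, Set.mem_setOf_eq, Set.mem_pi, Set.mem_univ, true_implies]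
      constructor
      · intro h i
        by_cases hij : i = j
        · subst hij; simp [h]
        · simp [hij]
      · intro h
        have := h j
        simpa using this
    rw [hset, hμ, Measure.pi_pi]
    refine Finset.prod_eq_zero (Finset.mem_univ j) ?_
    simp [hBadUNull]
  have hBigNull : μ (⋃ j, Cyl j) = 0 := measure_iUnion_null hCylNull
  -- the good event implies the conclusion
  have hmain : (⋃ j, Cyl j)ᶜ ⊆ {Φ : Fin n → Fin p → Fin d → ℝ |
        ∀ X X' : Matrix (Fin m) (Fin n) ℝ,
          (∀ j, (Finset.univ.filter fun i => X i j ≠ 0).card ≤ k) →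
          (∀ j, (Finset.univ.filter fun i => X' i j ≠ 0).card ≤ k) →
          (∀ j : Fin n, (Matrix.of (Φ j)).mulVec (A'.mulVec fun i => X' i j)
              = (Matrix.of (Φ j)).mulVec (A.mulVec fun i => X i j)) →
          A' * X' = A * X} := by
    intro Φ hΦ
    simp only [Set.mem_compl_iff, Set.mem_iUnion, not_exists] at hΦ
    intro X X' hX hX' hmeasure
    -- good for each coordinate
    have hgood : ∀ j (z : Fin m → ℝ),
        (Finset.univ.filter fun i => z i ≠ 0).card ≤ 2 * k →
        (Matrix.of (Φ j)).mulVec (A.mulVec z) = 0 → z = 0 := by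
      intro j z hzcard hz0
      refine det_good hkp A (Φ j) ?_ z hzcard hz0
      intro T hT
      have := hΦ j
      simp only [hCyl, Set.mem_setOf_eq, hBadU, Set.mem_iUnion, not_exists] at this
      have h2 := this T hT
      simp only [hBadSet, Set.mem_setOf_eq, not_not] at h2
      exact h2
    -- column-wise computation
    have hcolumn : ∀ j : Fin n, A'.mulVec (fun i => X' i j) = A.mulVec (fun i => X i j) := by
      intro j
      set x : Fin m → ℝ := fun i => X i j with hx
      set x' : Fin m → ℝ := fun i => X' i j with hx'
      set y' : Fin m → ℝ := fun i => D (P i) * x' (P i) with hy'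
      -- A' x' = A y'
      have hPerm : ∀ w : Fin m → ℝ,
          ((Equiv.toPEquiv P).toMatrix : Matrix (Fin m) (Fin m) ℝ).mulVec w = fun i => w (P i) := by
        intro w
        funext i
        simp only [Matrix.mulVec, dotProduct, PEquiv.toMatrix_apply,
          Equiv.toPEquiv_apply, Option.mem_def, Option.some.injEq, boole_mul]
        rw [Finset.sum_ite_eq]
        simp
      have h1 : A'.mulVec x' = A.mulVec y' := by
        rw [hA']
        rw [← Matrix.mulVec_mulVec, ← Matrix.mulVec_mulVec]
        congr 1
        rw [hPerm]
        funext i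
        simp [Matrix.mulVec_diagonal, hy']
      -- support of y'
      have hy'card : (Finset.univ.filter fun i => y' i ≠ 0).card ≤ k := by
        have hcard : (Finset.univ.filter fun i => y' i ≠ 0).card
            = (Finset.univ.filter fun i => x' i ≠ 0).card := by
          refine Finset.card_bij (fun i _ => P i) ?_ ?_ ?_
          · intro a ha
            simp only [Finset.mem_filter, Finset.mem_univ, true_and, hy'] at ha ⊢
            intro h
            exact ha (by simp [h])
          · intro a _ b _ hab
            exact P.injective hab
          · intro b hb
            simp only [Finset.mem_filter, Finset.mem_univ, true_and] at hb
            refine ⟨P.symm b, ?_, by simp⟩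
            simp only [Finset.mem_filter, Finset.mem_univ, true_and, hy',
              Equiv.apply_symm_apply]
            exact mul_ne_zero (hD b) hb
        rw [hcard]
        exact hX' j
      -- z and its support
      set z : Fin m → ℝ := y' - x with hz
      have hzcard : (Finset.univ.filter fun i => z i ≠ 0).card ≤ 2 * k := by
        have hsub : (Finset.univ.filter fun i => z i ≠ 0)
            ⊆ (Finset.univ.filter fun i => y' i ≠ 0) ∪ (Finset.univ.filter fun i => x i ≠ 0) := by
          intro i hi
          simp only [Finset.mem_filter, Finset.mem_univ, true_and, Finset.mem_union] at hi ⊢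
          by_contra h
          push_neg at h
          obtain ⟨h1', h2'⟩ := h
          exact hi (by rw [hz]; simp [Pi.sub_apply, h1', h2'])
        refine le_trans (Finset.card_le_card hsub) ?_
        refine le_trans (Finset.card_union_le _ _) ?_
        have hXx : (Finset.univ.filter fun i => x i ≠ 0).card ≤ k := hX j
        omega
      -- measurement of z is zero
      have hz0 : (Matrix.of (Φ j)).mulVec (A.mulVec z) = 0 := by
        rw [hz, Matrix.mulVec_sub, Matrix.mulVec_sub, ← h1]
        rw [hmeasure j]
        simp [hx]
      have hz00 := hgood j z hzcard hz0
      have hyx : y' = x := sub_eq_zero.mp (by rw [← hz]; exact hz00)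
      show A'.mulVec x' = A.mulVec x
      rw [h1, hyx]
    -- from columns to matrices
    ext i j
    have := congrFun (hcolumn j) i
    simp only [Matrix.mulVec, dotProduct] at this
    simp only [Matrix.mul_apply]
    exact this
  -- conclude
  haveI hP1 : IsProbabilityMeasure ρ := by rw [hρ]; infer_instance
  haveI hP2 : IsProbabilityMeasure ν := by rw [hν]; infer_instance
  haveI hP3 : IsProbabilityMeasure μ := by rw [hμ]; infer_instance
  have hCylMeas : MeasurableSet (⋃ j, Cyl j) := by
    refine MeasurableSet.iUnion fun j => ?_
    exact measurable_pi_apply j hBadUMeas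
  refine le_antisymm prob_le_one ?_
  calc (1:ℝ≥0∞) = μ ((⋃ j, Cyl j)ᶜ) := by
        rw [prob_compl_eq_one_sub hCylMeas, hBigNull, tsub_zero]
    _ ≤ _ := measure_mono hmain
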